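/- For an integer k ≥ 3, cos(4π/(k+2)) is rational if and only if k ∈ {4, 6, 10}, with values cos(4π/6) = -1/2, cos(4π/8) = 0, and cos(4π/12) = 1/2. -/

import Mathlib

open Real

lemma den_sub_two' (q : ℚ) : (q - 2).den = q.den := by
  apply Nat.dvd_antisymm
  · have := Rat.add_den_dvd q (-2)
    simpa [sub_eq_add_neg] using this
  · have := Rat.add_den_dvd (q - 2) 2
    simpa using this

noncomputable def dseq' (q : ℚ) : ℕ → ℚ
  | 0 => q
  | m + 1 => (dseq' q m) ^ 2 - 2

lemma dseq'_den (q : ℚ) (m : ℕ) : (dseq' q m).den = q.den ^ (2 ^ m) := by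
  induction m with
  | zero => simp [dseq']
  | succ m ih =>
    show ((dseq' q m) ^ 2 - 2).den = _
    rw [den_sub_two', Rat.den_pow, ih, ← pow_mul, ← pow_succ]

lemma dseq'_cos (q : ℚ) (θ : ℝ) (h : Real.cos θ = (q : ℝ) / 2) (m : ℕ) :
    ((dseq' q m : ℚ) : ℝ) = 2 * Real.cos (2 ^ m * θ) := by
  induction m with
  | zero => simp [dseq', h]; ring
  | succ m ih =>
    have h2 : (2:ℝ) ^ (m+1) * θ = 2 * (2 ^ m * θ) := by ring
    show (((dseq' q m) ^ 2 - 2 : ℚ) : ℝ) = _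
    rw [h2, Real.cos_two_mul]
    push_cast
    rw [ih]
    ring

lemma dseq'_eq_of_modeq (N : ℕ) (hN5 : 5 ≤ N) (θ : ℝ) (hθ : θ = 4 * π / (N : ℝ))
    (q : ℚ) (hq : Real.cos θ = (q : ℝ) / 2) {m1 m2 : ℕ} (hlt : m1 < m2)
    (hmod : ((2 ^ m1 : ℕ) : ZMod N) = ((2 ^ m2 : ℕ) : ZMod N)) :
    dseq' q m1 = dseq' q m2 := by
  have hmd : 2 ^ m1 ≡ 2 ^ m2 [MOD N] := (ZMod.natCast_eq_natCast_iff _ _ _).mp hmod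
  have hle : 2 ^ m1 ≤ 2 ^ m2 := Nat.pow_le_pow_right (by norm_num) hlt.le
  obtain ⟨c, hc⟩ := (Nat.modEq_iff_dvd' hle).mp hmd
  have h2m2 : 2 ^ m2 = 2 ^ m1 + N * c := by omega
  have hNne : (N : ℝ) ≠ 0 := by positivity
  have hang : (2:ℝ) ^ m2 * θ = 2 ^ m1 * θ + (c : ℤ) * (2 * π) * 2 := by
    rw [hθ]
    have : ((2:ℝ)) ^ m2 = 2 ^ m1 + (N : ℝ) * c := by exact_mod_cast congrArg (Nat.cast : ℕ → ℝ) h2m2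
    rw [this]
    field_simp
    push_cast; ring
  have hcoseq : Real.cos (2 ^ m2 * θ) = Real.cos (2 ^ m1 * θ) := by
    rw [hang]
    have h' : (2:ℝ) ^ m1 * θ + (c : ℤ) * (2 * π) * 2 = 2 ^ m1 * θ + ((2 * c : ℤ)) * (2 * π) := by
      push_cast; ring
    rw [h', Real.cos_add_int_mul_two_pi]
  have e1 := dseq'_cos q θ hq m1
  have e2 := dseq'_cos q θ hq m2
  have : ((dseq' q m1 : ℚ) : ℝ) = ((dseq' q m2 : ℚ) : ℝ) := by
    rw [e1, e2, hcoseq]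
  exact_mod_cast this

theorem cos_four_pi_div_rational_iff (k : ℤ) (hk : 3 ≤ k) :
    ((∃ s : ℚ, Real.cos (4 * Real.pi / ((k : ℝ) + 2)) = s) ↔ k = 4 ∨ k = 6 ∨ k = 10) ∧
    Real.cos (4 * Real.pi / 6) = -(1/2) ∧
    Real.cos (4 * Real.pi / 8) = 0 ∧
    Real.cos (4 * Real.pi / 12) = 1/2 := by
  have c1 : Real.cos (4 * Real.pi / 6) = -(1/2) := by
    rw [show 4 * Real.pi / 6 = Real.pi - Real.pi / 3 by ring, Real.cos_pi_sub,
      Real.cos_pi_div_three]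
  have c2 : Real.cos (4 * Real.pi / 8) = 0 := by
    rw [show 4 * Real.pi / 8 = Real.pi / 2 by ring, Real.cos_pi_div_two]
  have c3 : Real.cos (4 * Real.pi / 12) = 1/2 := by
    rw [show 4 * Real.pi / 12 = Real.pi / 3 by ring, Real.cos_pi_div_three]
  refine ⟨⟨?_, ?_⟩, c1, c2, c3⟩
  · rintro ⟨s, hs⟩
    obtain ⟨N, hN⟩ : ∃ N : ℕ, (N : ℤ) = k + 2 := ⟨(k + 2).toNat, by omega⟩
    have hN5 : 5 ≤ N := by omega
    have hnN : (k : ℝ) + 2 = (N : ℝ) := by exact_mod_cast congrArg (Int.cast : ℤ → ℝ) hN.symm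
    set θ : ℝ := 4 * π / (N : ℝ) with hθdef
    have hs' : Real.cos θ = (s : ℝ) := by rw [← hs, hnN]
    have hN0 : (0:ℝ) < (N : ℝ) := by positivity
    have hNN5 : (5:ℝ) ≤ (N : ℝ) := by exact_mod_cast hN5
    have hθ0 : 0 < θ := by positivity
    have hθπ : θ < π := by
      rw [hθdef, div_lt_iff₀ hN0]
      nlinarith [Real.pi_pos]
    set q : ℚ := 2 * s with hqdef
    have hq : Real.cos θ = (q : ℝ) / 2 := by rw [hs', hqdef]; push_cast; ring
    -- q is an integer
    have hden : q.den = 1 := by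
      by_contra hd
      haveI : NeZero N := ⟨by omega⟩
      have hd2 : 2 ≤ q.den := by have := q.den_pos; omega
      obtain ⟨m1, m2, hne, hmap⟩ :=
        Finite.exists_ne_map_eq_of_infinite (fun m : ℕ => ((2 ^ m : ℕ) : ZMod N))
      have key : ∀ a b : ℕ, a < b → ((2 ^ a : ℕ) : ZMod N) = ((2 ^ b : ℕ) : ZMod N) → False := by
        intro a b hab hmod
        have := dseq'_eq_of_modeq N hN5 θ hθdef q hq hab hmod
        have hdeneq : q.den ^ (2 ^ a) = q.den ^ (2 ^ b) := by
          rw [← dseq'_den, ← dseq'_den, this]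
        have h1 : (2:ℕ) ^ a = 2 ^ b := Nat.pow_right_injective hd2 hdeneq
        have := Nat.pow_right_injective (le_refl 2) h1
        omega
      rcases Ne.lt_or_gt hne with hlt | hlt
      · exact key m1 m2 hlt hmap
      · exact key m2 m1 hlt hmap.symm
    obtain ⟨z, hz⟩ : ∃ z : ℤ, (z : ℚ) = q := ⟨q.num, (Rat.den_eq_one_iff q).mp hden⟩
    have hcz : Real.cos θ = (z : ℝ) / 2 := by
      rw [hq]; rw [← hz]; push_cast; ring
    have hzabs : |z| ≤ 2 := by
      have h1 : |Real.cos θ| ≤ 1 := Real.abs_cos_le_one θ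
      rw [hcz, abs_div] at h1
      have : |(z:ℝ)| ≤ 2 := by
        rw [abs_of_pos (show (0:ℝ) < 2 by norm_num)] at h1
        linarith [(div_le_one (show (0:ℝ) < 2 by norm_num)).mp h1]
      exact_mod_cast this
    have hmem0 : θ ∈ Set.Icc 0 π := ⟨hθ0.le, hθπ.le⟩
    have hpi := Real.pi_pos
    have getN : ∀ c : ℝ, θ = c → 4 * π = c * (N : ℝ) := by
      intro c hc
      rw [hθdef] at hc
      field_simp at hc
      linarith
    obtain ⟨hzle, hzle'⟩ := abs_le.mp hzabs
    interval_cases z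
    · -- z = -2 : cos θ = -1, θ = π
      exfalso
      have : θ = π := Real.injOn_cos hmem0 ⟨hpi.le, le_refl π⟩
        (by rw [hcz, Real.cos_pi]; norm_num)
      linarith
    · -- z = -1 : cos θ = -1/2, θ = 2π/3, N = 6, k = 4
      have hmem1 : 2 * π / 3 ∈ Set.Icc 0 π := ⟨by positivity, by linarith⟩
      have hθeq : θ = 2 * π / 3 := Real.injOn_cos hmem0 hmem1
        (by rw [hcz, show 2 * π / 3 = π - π / 3 by ring, Real.cos_pi_sub,
          Real.cos_pi_div_three]; norm_num)
      have h4 := getN _ hθeq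
      have hN6 : (N : ℝ) = 6 := by nlinarith
      have : N = 6 := by exact_mod_cast hN6
      left; omega
    · -- z = 0 : cos θ = 0, θ = π/2, N = 8, k = 6
      have hmem1 : π / 2 ∈ Set.Icc 0 π := ⟨by positivity, by linarith⟩
      have hθeq : θ = π / 2 := Real.injOn_cos hmem0 hmem1
        (by rw [hcz, Real.cos_pi_div_two]; norm_num)
      have h4 := getN _ hθeq
      have hN8 : (N : ℝ) = 8 := by nlinarith
      have : N = 8 := by exact_mod_cast hN8
      right; left; omega
    · -- z = 1 : cos θ = 1/2, θ = π/3, N = 12, k = 10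
      have hmem1 : π / 3 ∈ Set.Icc 0 π := ⟨by positivity, by linarith⟩
      have hθeq : θ = π / 3 := Real.injOn_cos hmem0 hmem1
        (by rw [hcz, Real.cos_pi_div_three]; norm_num)
      have h4 := getN _ hθeq
      have hN12 : (N : ℝ) = 12 := by nlinarith
      have : N = 12 := by exact_mod_cast hN12
      right; right; omega
    · -- z = 2 : cos θ = 1, θ = 0
      exfalso
      have : θ = 0 := Real.injOn_cos hmem0 ⟨le_refl 0, hpi.le⟩
        (by rw [hcz, Real.cos_zero]; norm_num)
      linarith
  · rintro (rfl | rfl | rfl)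
    · refine ⟨-(1/2), ?_⟩
      rw [show ((4:ℤ):ℝ) + 2 = 6 by norm_num, c1]
      norm_num
    · refine ⟨0, ?_⟩
      rw [show ((6:ℤ):ℝ) + 2 = 8 by norm_num, c2]
      norm_num
    · refine ⟨1/2, ?_⟩
      rw [show ((10:ℤ):ℝ) + 2 = 12 by norm_num, c3]
      norm_num
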